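/- Let X be a locally compact Hausdorff space. The set of maximal elements of the upper space UX is exactly the set of singletons {{x} : x ∈ X}, and the map x ↦ {x} is a homeomorphism from X onto max(UX), where max(UX) carries the subspace topology inherited from the Scott topology on UX. -/

import Mathlib

/-- A nonempty subset in which any two elements have an upper bound in the set. -/
def IsDirectedSet {P : Type*} [PartialOrder P] (S : Set P) : Prop :=
  S.Nonempty ∧ ∀ x ∈ S, ∀ y ∈ S, ∃ z ∈ S, x ≤ z ∧ y ≤ z

/-- A nonempty subset in which any two elements have a lower bound in the set. -/
def IsFilteredSet {P : Type*} [PartialOrder P] (S : Set P) : Prop :=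
  S.Nonempty ∧ ∀ x ∈ S, ∀ y ∈ S, ∃ z ∈ S, z ≤ x ∧ z ≤ y

/-- `WayBelow x y` (`x ≪ y`): for every directed set `S` that has a supremum `s`,
`y ≤ s` implies `x ≤ a` for some `a ∈ S`. -/
def WayBelow {P : Type*} [PartialOrder P] (x y : P) : Prop :=
  ∀ S : Set P, IsDirectedSet S → ∀ s, IsLUB S s → y ≤ s → ∃ a ∈ S, x ≤ a

/-- `↡x = {a | a ≪ x}`. -/
def waydown {P : Type*} [PartialOrder P] (x : P) : Set P := {a | WayBelow a x}

/-- `↟x = {a | x ≪ a}`. -/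
def wayup {P : Type*} [PartialOrder P] (x : P) : Set P := {a | WayBelow x a}

/-- A poset is continuous if every `↡x` contains a directed set with supremum `x`. -/
def IsContinuousPoset (P : Type*) [PartialOrder P] : Prop :=
  ∀ x : P, ∃ S : Set P, S ⊆ waydown x ∧ IsDirectedSet S ∧ IsLUB S x

/-- A continuous poset is bicontinuous if `≪` has the dual characterization via
filtered infima and each `↟x` is filtered with infimum `x`. -/
def IsBicontinuousPoset (P : Type*) [PartialOrder P] : Prop :=
  IsContinuousPoset P ∧
  (∀ x y : P, WayBelow x y ↔
    ∀ S : Set P, IsFilteredSet S → ∀ i, IsGLB S i → i ≤ x → ∃ s ∈ S, s ≤ y) ∧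
  (∀ x : P, IsFilteredSet (wayup x) ∧ IsGLB (wayup x) x)

/-- Scott open: an upper set inaccessible by directed suprema. -/
def IsScottOpen {P : Type*} [PartialOrder P] (U : Set P) : Prop :=
  (∀ x ∈ U, ∀ y, x ≤ y → y ∈ U) ∧
  ∀ S : Set P, IsDirectedSet S → ∀ s, IsLUB S s → s ∈ U → (S ∩ U).Nonempty

/-- The upper space of a topological space: nonempty compact subsets
ordered by reverse inclusion. -/
structure UpperSpace (X : Type*) [TopologicalSpace X] where
  carrier : Set X
  nonempty' : carrier.Nonempty
  compact' : IsCompact carrier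

instance {X : Type*} [TopologicalSpace X] : PartialOrder (UpperSpace X) where
  le A B := B.carrier ⊆ A.carrier
  le_refl A := Set.Subset.refl _
  le_trans A B C h1 h2 := fun x hx => h1 (h2 hx)
  le_antisymm A B h1 h2 := by
    cases A; cases B
    simp only [UpperSpace.mk.injEq]
    exact Set.Subset.antisymm h2 h1

/-- The Scott topology on a poset. -/
def scottTop (P : Type*) [PartialOrder P] : TopologicalSpace P where
  IsOpen := IsScottOpen
  isOpen_univ :=
    ⟨fun _ _ _ _ => trivial, fun S hS _ _ _ => hS.1.imp fun a ha => ⟨ha, trivial⟩⟩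
  isOpen_inter := by
    rintro U V ⟨hU1, hU2⟩ ⟨hV1, hV2⟩
    refine ⟨fun x hx y hxy => ⟨hU1 x hx.1 y hxy, hV1 x hx.2 y hxy⟩, ?_⟩
    intro S hS s hs hsUV
    obtain ⟨u, huS, huU⟩ := hU2 S hS s hs hsUV.1
    obtain ⟨v, hvS, hvV⟩ := hV2 S hS s hs hsUV.2
    obtain ⟨z, hzS, hzu, hzv⟩ := hS.2 u huS v hvS
    exact ⟨z, hzS, hU1 u huU z hzu, hV1 v hvV z hzv⟩
  isOpen_sUnion := by
    intro C hC
    constructor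
    · rintro x ⟨U, hU, hxU⟩ y hxy
      exact ⟨U, hU, (hC U hU).1 x hxU y hxy⟩
    · rintro S hS s hs ⟨U, hU, hsU⟩
      obtain ⟨a, haS, haU⟩ := (hC U hU).2 S hS s hs hsU
      exact ⟨a, haS, U, hU, haU⟩

instance {X : Type*} [TopologicalSpace X] : TopologicalSpace (UpperSpace X) :=
  scottTop (UpperSpace X)

section AuxMax

open Topology Filter

variable {X : Type*} [TopologicalSpace X]

lemma UpperSpace.ext' {A B : UpperSpace X} (h : A.carrier = B.carrier) : A = B := by
  cases A; cases B; simpa using h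

/-- The singleton element of the upper space. -/
def USing (x : X) : UpperSpace X :=
  ⟨{x}, Set.singleton_nonempty x, isCompact_singleton⟩

lemma UpperSpace.le_def {A B : UpperSpace X} : A ≤ B ↔ B.carrier ⊆ A.carrier := Iff.rfl

lemma upperSpace_isOpen_iff {W : Set (UpperSpace X)} : IsOpen W ↔ IsScottOpen W := Iff.rfl

/-- `□U` is Scott open for `U` open. -/
lemma box_isScottOpen [T2Space X] {U : Set X} (hU : IsOpen U) :
    IsScottOpen {K : UpperSpace X | K.carrier ⊆ U} := by
  constructor
  · intro K hK L hKL
    exact Set.Subset.trans hKL hK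
  · intro S hS s hs hsU
    by_contra hcon
    rw [Set.not_nonempty_iff_eq_empty] at hcon
    have hne : ∀ A : S, ((A : UpperSpace X).carrier ∩ Uᶜ).Nonempty := by
      rintro ⟨A, hA⟩
      by_contra hA2
      rw [Set.not_nonempty_iff_eq_empty, ← Set.disjoint_iff_inter_eq_empty,
        Set.disjoint_compl_right_iff_subset] at hA2
      exact Set.eq_empty_iff_forall_notMem.mp hcon A ⟨hA, hA2⟩
    haveI : Nonempty S := hS.1.to_subtype
    have hdir : Directed (· ⊇ ·) (fun A : S => (A : UpperSpace X).carrier ∩ Uᶜ) := by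
      rintro ⟨A, hA⟩ ⟨B, hB⟩
      obtain ⟨C, hC, hCA, hCB⟩ := hS.2 A hA B hB
      exact ⟨⟨C, hC⟩, Set.inter_subset_inter_left _ hCA, Set.inter_subset_inter_left _ hCB⟩
    have hnon := IsCompact.nonempty_iInter_of_directed_nonempty_isCompact_isClosed
      (fun A : S => (A : UpperSpace X).carrier ∩ Uᶜ) hdir hne
      (fun A => (A : UpperSpace X).compact'.inter_right hU.isClosed_compl)
      (fun A => ((A : UpperSpace X).compact'.isClosed).inter hU.isClosed_compl)
    obtain ⟨y, hy⟩ := hnon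
    simp only [Set.mem_iInter, Set.mem_inter_iff, Set.mem_compl_iff] at hy
    -- y belongs to every A.carrier, hence to s.carrier (s is LUB), hence to U: contradiction
    have hyIn : ∀ A ∈ S, y ∈ A.carrier := fun A hA => (hy ⟨A, hA⟩).1
    have hyU : y ∉ U := (hy (Classical.arbitrary S)).2
    -- the intersection is a compact nonempty set, an upper bound of S
    obtain ⟨x0, hx0⟩ := hS.1
    set T : UpperSpace X := ⟨⋂ A : S, (A : UpperSpace X).carrier,
      ⟨y, Set.mem_iInter.mpr fun A => hyIn A A.2⟩,
      IsCompact.of_isClosed_subset x0.compact'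
        (isClosed_iInter fun A => (A : UpperSpace X).compact'.isClosed)
        (Set.iInter_subset (fun A : S => (A : UpperSpace X).carrier) ⟨x0, hx0⟩)⟩ with hT
    have hub : T ∈ upperBounds S := by
      intro A hA
      exact Set.iInter_subset (fun A : S => (A : UpperSpace X).carrier) ⟨A, hA⟩
    have hsT : s ≤ T := hs.2 hub
    have : y ∈ s.carrier := hsT (Set.mem_iInter.mpr fun A => hyIn A A.2)
    exact hyU (hsU this)

/-- Pulling back a Scott open along `x ↦ {x}` gives an open set. -/
lemma using_preimage_isOpen [T2Space X] [LocallyCompactSpace X] {W : Set (UpperSpace X)}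
    (hW : IsScottOpen W) : IsOpen {x : X | USing x ∈ W} := by
  rw [isOpen_iff_mem_nhds]
  intro x hx
  set S : Set (UpperSpace X) := {A | A.carrier ∈ 𝓝 x} with hSdef
  have hSdir : IsDirectedSet S := by
    constructor
    · obtain ⟨K, hKc, hKn⟩ := exists_compact_mem_nhds x
      exact ⟨⟨K, ⟨x, mem_of_mem_nhds hKn⟩, hKc⟩, hKn⟩
    · intro A hA B hB
      refine ⟨⟨A.carrier ∩ B.carrier, ⟨x, mem_of_mem_nhds hA, mem_of_mem_nhds hB⟩,
        A.compact'.inter_right B.compact'.isClosed⟩, Filter.inter_mem hA hB,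
        Set.inter_subset_left, Set.inter_subset_right⟩
  have hlub : IsLUB S (USing x) := by
    constructor
    · intro A hA
      exact Set.singleton_subset_iff.mpr (mem_of_mem_nhds hA)
    · intro t ht
      rw [UpperSpace.le_def]
      intro y hy
      rw [USing, Set.mem_singleton_iff]
      by_contra hyx
      obtain ⟨K, hKn, hKsub, hKc⟩ := local_compact_nhds (x := x) (n := {y}ᶜ)
        (isOpen_compl_singleton.mem_nhds (by simpa using Ne.symm hyx))
      have : (⟨K, ⟨x, mem_of_mem_nhds hKn⟩, hKc⟩ : UpperSpace X) ∈ S := hKn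
      exact hKsub (ht this hy) rfl
  obtain ⟨A, hAS, hAW⟩ := hW.2 S hSdir (USing x) hlub hx
  refine Filter.mem_of_superset (interior_mem_nhds.mpr hAS) ?_
  intro y hy
  exact hW.1 A hAW (USing y) (Set.singleton_subset_iff.mpr (interior_subset hy))

end AuxMax

/-- The maximal elements of the upper space are exactly the singletons, and
`x ↦ {x}` is a homeomorphism from `X` onto `max(UX)` with the relative Scott
topology. -/
theorem upperSpace_max_homeo {X : Type*} [TopologicalSpace X] [T2Space X]
    [LocallyCompactSpace X] :
    (∀ K : UpperSpace X, (∀ L : UpperSpace X, K ≤ L → L = K) ↔ ∃ x : X, K.carrier = {x}) ∧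
    ∃ h : X ≃ₜ {K : UpperSpace X // ∀ L : UpperSpace X, K ≤ L → L = K},
      ∀ x : X, (h x).val.carrier = {x} := by
  have hmax : ∀ K : UpperSpace X, (∀ L : UpperSpace X, K ≤ L → L = K) ↔
      ∃ x : X, K.carrier = {x} := by
    intro K
    constructor
    · intro h
      obtain ⟨x, hx⟩ := K.nonempty'
      have := h (USing x) (Set.singleton_subset_iff.mpr hx)
      exact ⟨x, by rw [← this]; rfl⟩
    · rintro ⟨x, hx⟩ L hL
      rw [UpperSpace.le_def, hx] at hL
      apply UpperSpace.ext'
      rw [hx]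
      obtain ⟨y, hy⟩ := L.nonempty'
      have hyx : y = x := hL hy
      apply Set.Subset.antisymm hL
      rw [← hyx]
      exact Set.singleton_subset_iff.mpr hy
  refine ⟨hmax, ?_⟩
  have hsingmax : ∀ x : X, ∀ L : UpperSpace X, USing x ≤ L → L = USing x := by
    intro x
    exact (hmax (USing x)).mpr ⟨x, rfl⟩
  -- the inverse map
  set g : {K : UpperSpace X // ∀ L : UpperSpace X, K ≤ L → L = K} → X :=
    fun k => ((hmax k.val).mp k.prop).choose with hg
  have hgspec : ∀ k, k.val.carrier = {g k} := fun k => ((hmax k.val).mp k.prop).choose_spec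
  have husing_cont : Continuous (fun x : X => USing x) :=
    continuous_def.mpr fun W hW => using_preimage_isOpen hW
  refine ⟨{
      toFun := fun x => ⟨USing x, hsingmax x⟩
      invFun := g
      left_inv := by
        intro x
        have h1 := hgspec ⟨USing x, hsingmax x⟩
        simp only [USing] at h1
        exact (Set.singleton_eq_singleton_iff.mp h1).symm
      right_inv := by
        intro k
        apply Subtype.ext
        apply UpperSpace.ext'
        exact (hgspec k).symm
      continuous_toFun := husing_cont.subtype_mk _
      continuous_invFun := by
        rw [continuous_def]
        intro U hU
        have : g ⁻¹' U = Subtype.val ⁻¹' {K : UpperSpace X | K.carrier ⊆ U} := by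
          ext k
          simp only [Set.mem_preimage, Set.mem_setOf_eq, hgspec k,
            Set.singleton_subset_iff]
        rw [this]
        exact (upperSpace_isOpen_iff.mpr (box_isScottOpen hU)).preimage
          continuous_subtype_val }, fun x => rfl⟩
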